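/- arXiv:1410.5554 — 2 statements merged into one kernel-verified Lean document; each statement's English description precedes it below -/
import Mathlib

section
/- Let U be a ℤ₊-valued long-tailed random variable (lim_{k→∞} P(U>k+1)/P(U>k) = 1) such that the probability mass sequence {P(U=k)} is eventually nonincreasing. Then for any positive integer h, any l₀ ∈ ℤ₊ and any ν ∈ {0,1,…,h−1}, lim_{k→∞} (Σ_{l=l₀}^{∞} P(U = k + l·h + ν)) / P(U > k) = 1/h. -/
open Filter Topology

/-- `P(U > k)` for a ℤ₊-valued random variable with pmf `p`. -/
noncomputable def tail (p : ℕ → ℝ) (k : ℕ) : ℝ := ∑' l : ℕ, p (k + 1 + l)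

lemma summable_affine {p : ℕ → ℝ} (hp : Summable p) (a b : ℕ) (hb : 0 < b) :
    Summable (fun l : ℕ => p (a + l * b)) :=
  hp.comp_injective (fun x y hxy => by
    exact Nat.eq_of_mul_eq_mul_right hb (by omega))

lemma tsum_group (f : ℕ → ℝ) (hf : Summable f) (h : ℕ) (hh : 0 < h) :
    ∑' m, f m = ∑' l : ℕ, ∑ j ∈ Finset.range h, f (l * h + j) := by
  haveI : NeZero h := ⟨hh.ne'⟩
  have he := (Nat.divModEquiv h).symm.tsum_eq f
  have hs : Summable (fun q : ℕ × Fin h => f (q.1 * h + (q.2 : ℕ))) :=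
    hf.comp_injective (Nat.divModEquiv h).symm.injective
  rw [← he]
  have : ∀ q : ℕ × Fin h, f ((Nat.divModEquiv h).symm q) = f (q.1 * h + (q.2 : ℕ)) := by
    intro q; rfl
  rw [tsum_congr this, Summable.tsum_prod' hs (fun b => Summable.of_finite)]
  refine tsum_congr fun l => ?_
  rw [tsum_fintype]
  exact Fin.sum_univ_eq_sum_range (fun j => f (l * h + j)) h

lemma anti_of_dec {p : ℕ → ℝ} {k₀ : ℕ} (hd : ∀ k, k₀ ≤ k → p (k + 1) ≤ p k) :
    ∀ a b : ℕ, k₀ ≤ a → a ≤ b → p b ≤ p a := by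
  intro a b ha hab
  induction b, hab using Nat.le_induction with
  | base => exact le_refl _
  | succ n hn ih => exact (hd n (ha.trans hn)).trans ih

lemma tail_succ (p : ℕ → ℝ) (hp : Summable p) (k : ℕ) :
    tail p k = p (k + 1) + tail p (k + 1) := by
  have hs : Summable (fun l : ℕ => p (k + 1 + l)) :=
    hp.comp_injective (fun x y hxy => by omega)
  have h0 : tail p (k + 1) = ∑' l : ℕ, p (k + 1 + (l + 1)) := by
    refine tsum_congr fun l => ?_
    congr 1; omega
  rw [tail, Summable.tsum_eq_zero_add hs, h0]

lemma ratio_tendsto (p : ℕ → ℝ) (htail : ∀ k, 0 < tail p k)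
    (hlt : Tendsto (fun k => tail p (k + 1) / tail p k) atTop (nhds 1)) (c : ℕ) :
    Tendsto (fun k => tail p (k + c) / tail p k) atTop (nhds 1) := by
  induction c with
  | zero =>
    exact Tendsto.congr (fun k => (div_self (htail (k + 0)).ne').symm) tendsto_const_nhds
  | succ c ih =>
    have h1 : Tendsto (fun k => tail p (k + c + 1) / tail p (k + c)) atTop (nhds 1) :=
      hlt.comp (tendsto_add_atTop_nat c)
    have h2 := h1.mul ih
    rw [one_mul] at h2
    refine h2.congr fun k => ?_
    rw [div_mul_div_comm, mul_comm (tail p (k + c + 1)),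
      mul_div_mul_left _ _ (htail (k + c)).ne']
    rfl

lemma q_tendsto (p : ℕ → ℝ) (hp : Summable p) (htail : ∀ k, 0 < tail p k)
    (hlt : Tendsto (fun k => tail p (k + 1) / tail p k) atTop (nhds 1)) :
    Tendsto (fun k => p (k + 1) / tail p k) atTop (nhds 0) := by
  have h2 : Tendsto (fun k => 1 - tail p (k + 1) / tail p k) atTop (nhds 0) := by
    have := (tendsto_const_nhds : Tendsto (fun _ : ℕ => (1:ℝ)) atTop (nhds 1)).sub hlt
    simpa using this
  refine h2.congr fun k => ?_
  rw [eq_div_iff (htail k).ne', sub_mul, one_mul, div_mul_cancel₀ _ (htail k).ne',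
    tail_succ p hp k]
  ring

lemma G_tendsto (p : ℕ → ℝ) (hp : Summable p) (htail : ∀ k, 0 < tail p k)
    (hlt : Tendsto (fun k => tail p (k + 1) / tail p k) atTop (nhds 1)) :
    Tendsto (fun m => p (m + 1) / tail p (m + 1)) atTop (nhds 0) := by
  have hr : Tendsto (fun m => tail p m / tail p (m + 1)) atTop (nhds 1) := by
    have := hlt.inv₀ one_ne_zero
    simp only [inv_div, inv_one] at this
    exact this
  have h2 := (q_tendsto p hp htail hlt).mul hr
  rw [zero_mul] at h2
  refine h2.congr fun m => ?_
  rw [div_mul_div_comm, mul_comm (p (m + 1)), mul_div_mul_left _ _ (htail m).ne']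

lemma pm_tendsto (p : ℕ → ℝ) (hp : Summable p) (htail : ∀ k, 0 < tail p k)
    (hlt : Tendsto (fun k => tail p (k + 1) / tail p k) atTop (nhds 1)) (c : ℕ) :
    Tendsto (fun k => p (k + c) / tail p k) atTop (nhds 0) := by
  rcases Nat.eq_zero_or_pos c with rfl | hc
  · have h1 : Tendsto (fun k : ℕ => p (k - 1 + 1) / tail p (k - 1 + 1)) atTop (nhds 0) :=
      (G_tendsto p hp htail hlt).comp (tendsto_sub_atTop_nat 1)
    refine h1.congr' ?_
    filter_upwards [eventually_ge_atTop 1] with k hk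
    have : k - 1 + 1 = k := by omega
    rw [this]; simp
  · obtain ⟨c', rfl⟩ : ∃ c', c = c' + 1 := ⟨c - 1, by omega⟩
    have h1 : Tendsto (fun k : ℕ => p (k + c' + 1) / tail p (k + c' + 1)) atTop (nhds 0) :=
      (G_tendsto p hp htail hlt).comp (tendsto_add_atTop_nat c')
    have h2 := h1.mul (ratio_tendsto p htail hlt (c' + 1))
    rw [zero_mul] at h2
    refine h2.congr fun k => ?_
    have e : k + c' + 1 = k + (c' + 1) := by omega
    rw [e, div_mul_div_comm, mul_comm (p (k + (c' + 1))),
      mul_div_mul_left _ _ (htail (k + (c' + 1))).ne']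

lemma lower_div {H S T A : ℝ} (hH : 0 < H) (hT : 0 < T) (hlow : A ≤ H * S) :
    1 / H * (A / T) ≤ S / T := by
  have h1 : 1 / H * (A / T) = A / (H * T) := by
    field_simp
  have h2 : S / T = (H * S) / (H * T) := (mul_div_mul_left _ _ hH.ne').symm
  rw [h1, h2]
  exact (div_le_div_iff_of_pos_right (mul_pos hH hT)).mpr hlow

lemma upper_div {H S T A P : ℝ} (hH : 0 < H) (hT : 0 < T) (hup : H * S ≤ A + H * P) :
    S / T ≤ 1 / H * (A / T) + P / T := by
  have h1 : S / T = (H * S) / (H * T) := (mul_div_mul_left _ _ hH.ne').symm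
  have h2 : 1 / H * (A / T) + P / T = (A + H * P) / (H * T) := by
    have hHne : H ≠ 0 := hH.ne'
    have hTne : T ≠ 0 := hT.ne'
    field_simp
  rw [h1, h2]
  exact (div_le_div_iff_of_pos_right (mul_pos hH hT)).mpr hup

/-- If `U` is long-tailed and its probability mass sequence is eventually nonincreasing,
then for every `h ≥ 1`, `l₀ ∈ ℤ₊` and `ν ∈ {0,…,h-1}`,
`(Σ_{l ≥ l₀} P(U = k + lh + ν)) / P(U > k) → 1/h`. -/
theorem stmt2 (p : ℕ → ℝ) (hnn : ∀ k, 0 ≤ p k) (hsum : HasSum p 1)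
    (htail : ∀ k, 0 < tail p k)
    (hlt : Tendsto (fun k => tail p (k + 1) / tail p k) atTop (nhds 1))
    (hdec : ∃ k₀ : ℕ, ∀ k, k₀ ≤ k → p (k + 1) ≤ p k)
    (h : ℕ) (hh : 0 < h) (l₀ : ℕ) (ν : ℕ) (hν : ν < h) :
    Tendsto (fun k => (∑' l : ℕ, p (k + (l₀ + l) * h + ν)) / tail p k)
      atTop (nhds (1 / (h : ℝ))) := by
  obtain ⟨k₀, hd⟩ := hdec
  have hp : Summable p := hsum.summable
  have anti := anti_of_dec hd
  set c := l₀ * h + ν with hc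
  have hH : (0:ℝ) < (h : ℝ) := by exact_mod_cast hh
  -- rewrite the numerator
  have hnum : ∀ k, (∑' l : ℕ, p (k + (l₀ + l) * h + ν)) = ∑' l : ℕ, p (k + c + l * h) := by
    intro k
    refine tsum_congr fun l => ?_
    congr 1; rw [hc]; ring
  set S : ℕ → ℝ := fun k => ∑' l : ℕ, p (k + c + l * h) with hS
  have hSsum : ∀ k, Summable (fun l : ℕ => p (k + c + l * h)) :=
    fun k => summable_affine hp (k + c) h hh
  -- grouping of the tail
  have hgroup : ∀ k, tail p (k + c) =
      ∑' l : ℕ, ∑ j ∈ Finset.range h, p (k + c + 1 + (l * h + j)) := by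
    intro k
    exact tsum_group (fun m => p (k + c + 1 + m))
      (hp.comp_injective (fun x y hxy => by omega)) h hh
  have hinner_sum : ∀ k, Summable
      (fun l : ℕ => ∑ j ∈ Finset.range h, p (k + c + 1 + (l * h + j))) := by
    intro k
    refine summable_sum fun j _ => ?_
    refine (summable_affine hp (k + c + 1 + j) h hh).congr fun l => ?_
    congr 1; ring
  -- lower bound: tail p (k+c) ≤ h * S k
  have hlow : ∀ k, k₀ ≤ k → tail p (k + c) ≤ (h : ℝ) * S k := by
    intro k hk
    rw [hgroup k]
    have : (h : ℝ) * S k = ∑' l : ℕ, (h : ℝ) * p (k + c + l * h) := by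
      rw [tsum_mul_left]
    rw [this]
    refine Summable.tsum_le_tsum ?_ (hinner_sum k) ((hSsum k).mul_left _)
    intro l
    calc ∑ j ∈ Finset.range h, p (k + c + 1 + (l * h + j))
        ≤ ∑ _j ∈ Finset.range h, p (k + c + l * h) := by
          refine Finset.sum_le_sum fun j _ => ?_
          exact anti (k + c + l * h) (k + c + 1 + (l * h + j)) (by omega) (by omega)
      _ = (h : ℝ) * p (k + c + l * h) := by
          rw [Finset.sum_const, Finset.card_range, nsmul_eq_mul]
  -- upper bound: h * S k ≤ tail p (k+c) + h * p (k+c)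
  have hup : ∀ k, k₀ ≤ k → (h : ℝ) * S k ≤ tail p (k + c) + (h : ℝ) * p (k + c) := by
    intro k hk
    have hsplit : S k = p (k + c) + ∑' l : ℕ, p (k + c + (l + 1) * h) := by
      have hSk : S k = ∑' l : ℕ, p (k + c + l * h) := rfl
      rw [hSk, Summable.tsum_eq_zero_add (hSsum k)]
      norm_num
    rw [hsplit, mul_add]
    have key : (h : ℝ) * (∑' l : ℕ, p (k + c + (l + 1) * h)) ≤ tail p (k + c) := by
      rw [hgroup k, ← tsum_mul_left]
      refine Summable.tsum_le_tsum ?_ ?_ (hinner_sum k)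
      · intro l
        calc (h : ℝ) * p (k + c + (l + 1) * h)
            = ∑ _j ∈ Finset.range h, p (k + c + (l + 1) * h) := by
              rw [Finset.sum_const, Finset.card_range, nsmul_eq_mul]
          _ ≤ ∑ j ∈ Finset.range h, p (k + c + 1 + (l * h + j)) := by
              refine Finset.sum_le_sum fun j hj => ?_
              have hjh : j < h := Finset.mem_range.mp hj
              refine anti (k + c + 1 + (l * h + j)) (k + c + (l + 1) * h) (by omega) ?_
              have : (l + 1) * h = l * h + h := by ring
              omega
      · refine Summable.mul_left _ ?_
        refine (summable_affine hp (k + c + h) h hh).congr fun l => ?_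
        congr 1; ring
    linarith
  -- the squeeze
  have hSnn : ∀ k, 0 ≤ S k := fun k => tsum_nonneg fun l => hnn _
  have hA : Tendsto (fun k => (1 / (h:ℝ)) * (tail p (k + c) / tail p k)) atTop
      (nhds (1 / (h:ℝ))) := by
    have := (tendsto_const_nhds : Tendsto (fun _ : ℕ => 1 / (h:ℝ)) atTop _).mul
      (ratio_tendsto p htail hlt c)
    simpa using this
  have hB : Tendsto (fun k => (1 / (h:ℝ)) * (tail p (k + c) / tail p k)
      + p (k + c) / tail p k) atTop (nhds (1 / (h:ℝ))) := by
    have := hA.add (pm_tendsto p hp htail hlt c)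
    simpa using this
  have hmain : Tendsto (fun k => S k / tail p k) atTop (nhds (1 / (h:ℝ))) := by
    refine tendsto_of_tendsto_of_tendsto_of_le_of_le' hA hB ?_ ?_
    · filter_upwards [eventually_ge_atTop k₀] with k hk
      exact lower_div hH (htail k) (hlow k hk)
    · filter_upwards [eventually_ge_atTop k₀] with k hk
      exact upper_div hH (htail k) (hup k hk)
  refine hmain.congr fun k => ?_
  rw [hnum k]
end

section
/- Let U be a ℤ₊-valued random variable in S_loc(1), and let U^{(1)}, …, U^{(n)} be independent ℤ₊-valued random variables with lim_{k→∞} P(U^{(j)} = k)/P(U = k) = c_j ∈ [0,∞) for each j. Then lim_{k→∞} P(U^{(1)} + ⋯ + U^{(n)} = k)/P(U = k) = c₁ + ⋯ + c_n. -/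
open Filter Topology

/-- Discrete convolution of two pmfs on ℤ₊. -/
noncomputable def conv (f g : ℕ → ℝ) (k : ℕ) : ℝ :=
  ∑ l ∈ Finset.range (k + 1), f (k - l) * g l

/-- Point mass at 0 (unit for convolution). -/
noncomputable def delta0 : ℕ → ℝ := fun k => if k = 0 then 1 else 0

/-- Convolution of a list of pmfs; this is the pmf of the sum of independent random
variables with those pmfs. -/
noncomputable def convList : List (ℕ → ℝ) → ℕ → ℝ
  | [] => delta0
  | f :: fs => conv f (convList fs)

/-- `U ∈ S_loc(1)`: locally subexponential with span one. -/
def SLocOne (q : ℕ → ℝ) : Prop :=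
  (∀ᶠ k in atTop, 0 < q k) ∧
    Tendsto (fun k => q (k + 1) / q k) atTop (nhds 1) ∧
    Tendsto (fun k => conv q q k / q k) atTop (nhds 2)

lemma conv_eq (f g : ℕ → ℝ) (k : ℕ) :
    conv f g k = ∑ l ∈ Finset.range (k + 1), f l * g (k - l) := by
  rw [conv, ← Finset.sum_range_reflect]
  refine Finset.sum_congr rfl fun l hl => ?_
  rw [Finset.mem_range] at hl
  have h1 : k + 1 - 1 - l = k - l := by omega
  have h2 : k - (k - l) = l := by omega
  rw [h1, h2]

lemma conv_nonneg {f g : ℕ → ℝ} (hf : ∀ k, 0 ≤ f k) (hg : ∀ k, 0 ≤ g k) (k : ℕ) :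
    0 ≤ conv f g k :=
  Finset.sum_nonneg fun l _ => mul_nonneg (hf _) (hg _)

lemma hasSum_conv {f g : ℕ → ℝ} (hf : ∀ k, 0 ≤ f k) (hg : ∀ k, 0 ≤ g k)
    (hf1 : HasSum f 1) (hg1 : HasSum g 1) : HasSum (conv f g) 1 := by
  have hfn : Summable fun x => ‖f x‖ := by
    refine hf1.summable.congr fun x => ?_
    rw [Real.norm_eq_abs, abs_of_nonneg (hf x)]
  have hgn : Summable fun x => ‖g x‖ := by
    refine hg1.summable.congr fun x => ?_
    rw [Real.norm_eq_abs, abs_of_nonneg (hg x)]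
  have := hasSum_sum_range_mul_of_summable_norm hfn hgn
  rw [hf1.tsum_eq, hg1.tsum_eq, one_mul] at this
  refine this.congr_fun fun k => ?_
  exact conv_eq f g k

lemma ratio_shift {p : ℕ → ℝ} (hpos : ∀ᶠ k in atTop, 0 < p k)
    (hr : Tendsto (fun k => p (k + 1) / p k) atTop (nhds 1)) (l : ℕ) :
    Tendsto (fun k => p (k - l) / p k) atTop (nhds 1) := by
  induction l with
  | zero =>
    refine Tendsto.congr' ?_ tendsto_const_nhds
    filter_upwards [hpos] with k hk
    simp [div_self hk.ne']
  | succ l ih =>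
    have hinv : Tendsto (fun k => p k / p (k + 1)) atTop (nhds 1) := by
      have := hr.inv₀ one_ne_zero
      simp only [inv_div, inv_one] at this
      exact this
    have h1 : Tendsto (fun k => p (k - (l + 1)) / p (k - l)) atTop (nhds 1) := by
      have hcomp := hinv.comp (tendsto_sub_atTop_nat (l + 1))
      refine Tendsto.congr' ?_ hcomp
      filter_upwards [eventually_ge_atTop (l + 1)] with k hk
      have : k - (l + 1) + 1 = k - l := by omega
      simp [Function.comp, this]
    have hmul := h1.mul ih
    rw [one_mul] at hmul
    refine Tendsto.congr' ?_ hmul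
    have hpos' : ∀ᶠ k in atTop, 0 < p (k - l) :=
      (tendsto_sub_atTop_nat l).eventually hpos
    filter_upwards [hpos'] with k hk
    field_simp

lemma shift_div {p f : ℕ → ℝ} (hpos : ∀ᶠ k in atTop, 0 < p k)
    (hr : Tendsto (fun k => p (k + 1) / p k) atTop (nhds 1)) {a : ℝ}
    (hfa : Tendsto (fun k => f k / p k) atTop (nhds a)) (l : ℕ) :
    Tendsto (fun k => f (k - l) / p k) atTop (nhds a) := by
  have h1 : Tendsto (fun k => f (k - l) / p (k - l)) atTop (nhds a) :=
    hfa.comp (tendsto_sub_atTop_nat l)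
  have h2 := h1.mul (ratio_shift hpos hr l)
  rw [mul_one] at h2
  refine Tendsto.congr' ?_ h2
  filter_upwards [(tendsto_sub_atTop_nat l).eventually hpos] with k hk
  field_simp

lemma boundary_tendsto {p f g : ℕ → ℝ} (hpos : ∀ᶠ k in atTop, 0 < p k)
    (hr : Tendsto (fun k => p (k + 1) / p k) atTop (nhds 1)) {a : ℝ}
    (hfa : Tendsto (fun k => f k / p k) atTop (nhds a)) (m : ℕ) :
    Tendsto (fun k => (∑ l ∈ Finset.range (m + 1), f (k - l) * g l) / p k) atTop
      (nhds (a * ∑ l ∈ Finset.range (m + 1), g l)) := by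
  have : ∀ k, (∑ l ∈ Finset.range (m + 1), f (k - l) * g l) / p k
      = ∑ l ∈ Finset.range (m + 1), (f (k - l) / p k) * g l := by
    intro k
    rw [Finset.sum_div]
    exact Finset.sum_congr rfl fun l _ => by ring
  simp only [this, Finset.mul_sum]
  refine tendsto_finset_sum _ fun l _ => ?_
  exact (shift_div hpos hr hfa l).mul_const (g l)

lemma conv_split (f g : ℕ → ℝ) {m k : ℕ} (hk : 2 * m + 2 ≤ k) :
    conv f g k = (∑ l ∈ Finset.range (m + 1), f (k - l) * g l)
      + (∑ l ∈ Finset.Ico (m + 1) (k - m), f (k - l) * g l)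
      + ∑ l ∈ Finset.range (m + 1), f l * g (k - l) := by
  have h1 : m + 1 ≤ k - m := by omega
  have h2 : k - m ≤ k + 1 := by omega
  have e1 : conv f g k = ∑ l ∈ Finset.Ico 0 (k + 1), f (k - l) * g l := by
    rw [conv, Finset.range_eq_Ico]
  rw [e1, ← Finset.sum_Ico_consecutive _ (Nat.zero_le (m + 1)) (le_trans h1 h2),
    ← Finset.sum_Ico_consecutive _ h1 h2, ← Finset.range_eq_Ico, add_assoc]
  congr 1
  congr 1
  refine Finset.sum_nbij' (i := fun l : ℕ => k - l) (j := fun l : ℕ => k - l) ?_ ?_ ?_ ?_ ?_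
  · intro l hl
    rw [Finset.mem_Ico] at hl
    rw [Finset.mem_range]
    omega
  · intro l hl
    rw [Finset.mem_range] at hl
    rw [Finset.mem_Ico]
    omega
  · intro l hl
    rw [Finset.mem_Ico] at hl
    omega
  · intro l hl
    rw [Finset.mem_range] at hl
    omega
  · intro l hl
    rw [Finset.mem_Ico] at hl
    have : k - (k - l) = l := by omega
    rw [this]

lemma boundary_tendsto' {p f g : ℕ → ℝ} (hpos : ∀ᶠ k in atTop, 0 < p k)
    (hr : Tendsto (fun k => p (k + 1) / p k) atTop (nhds 1)) {b : ℝ}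
    (hgb : Tendsto (fun k => g k / p k) atTop (nhds b)) (m : ℕ) :
    Tendsto (fun k => (∑ l ∈ Finset.range (m + 1), f l * g (k - l)) / p k) atTop
      (nhds (b * ∑ l ∈ Finset.range (m + 1), f l)) := by
  have h := boundary_tendsto (g := f) hpos hr hgb m
  refine Tendsto.congr ?_ h
  intro k
  congr 1
  exact Finset.sum_congr rfl fun l _ => by ring

lemma mid_p_tendsto {p : ℕ → ℝ} (hS : SLocOne p) (m : ℕ) :
    Tendsto (fun k => (∑ l ∈ Finset.Ico (m + 1) (k - m), p (k - l) * p l) / p k) atTop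
      (nhds (2 - 2 * ∑ l ∈ Finset.range (m + 1), p l)) := by
  obtain ⟨hpos, hr, hconv⟩ := hS
  have hone : Tendsto (fun k => p k / p k) atTop (nhds 1) := by
    refine Tendsto.congr' ?_ tendsto_const_nhds
    filter_upwards [hpos] with k hk
    simp [div_self hk.ne']
  have h1 := boundary_tendsto (g := p) hpos hr hone m
  have h2 := boundary_tendsto' (f := p) hpos hr hone m
  have h := (hconv.sub h1).sub h2
  have hlim : (2 : ℝ) - 1 * ∑ l ∈ Finset.range (m + 1), p l
      - 1 * ∑ l ∈ Finset.range (m + 1), p l = 2 - 2 * ∑ l ∈ Finset.range (m + 1), p l := by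
    ring
  rw [hlim] at h
  refine Tendsto.congr' ?_ h
  filter_upwards [eventually_ge_atTop (2 * m + 2)] with k hk
  rw [conv_split p p hk]
  ring

lemma key {p f g : ℕ → ℝ} (hpnn : ∀ k, 0 ≤ p k) (hsum : HasSum p 1) (hS : SLocOne p)
    (hfnn : ∀ k, 0 ≤ f k) (hgnn : ∀ k, 0 ≤ g k)
    (hfsum : HasSum f 1) (hgsum : HasSum g 1) {a b : ℝ}
    (hfa : Tendsto (fun k => f k / p k) atTop (nhds a))
    (hgb : Tendsto (fun k => g k / p k) atTop (nhds b)) :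
    Tendsto (fun k => conv f g k / p k) atTop (nhds (a + b)) := by
  obtain ⟨hpos, hr, hconv⟩ := hS
  have ha : 0 ≤ a := by
    refine ge_of_tendsto hfa ?_
    filter_upwards [hpos] with k hk using div_nonneg (hfnn k) hk.le
  have hb : 0 ≤ b := by
    refine ge_of_tendsto hgb ?_
    filter_upwards [hpos] with k hk using div_nonneg (hgnn k) hk.le
  set C : ℝ := a + b + 2 with hC
  have hCpos : 0 < C := by positivity
  have hfC : ∀ᶠ k in atTop, f k ≤ C * p k := by
    filter_upwards [hfa.eventually_lt_const (show a < C by simp [hC]; linarith), hpos]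
      with k h1 h2
    exact le_of_lt ((div_lt_iff₀ h2).mp h1)
  have hgC : ∀ᶠ k in atTop, g k ≤ C * p k := by
    filter_upwards [hgb.eventually_lt_const (show b < C by simp [hC]; linarith), hpos]
      with k h1 h2
    exact le_of_lt ((div_lt_iff₀ h2).mp h1)
  obtain ⟨N₀, hN₀⟩ := eventually_atTop.mp (hfC.and hgC)
  rw [Metric.tendsto_nhds]
  intro ε hε
  have hεpos6 : 0 < ε / 6 := by linarith
  -- choose m
  have hm2 : Tendsto (fun m => C ^ 2 * (2 - 2 * ∑ l ∈ Finset.range (m + 1), p l)) atTop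
      (nhds 0) := by
    have h1 : Tendsto (fun m : ℕ => ∑ l ∈ Finset.range (m + 1), p l) atTop (nhds 1) :=
      hsum.tendsto_sum_nat.comp (tendsto_add_atTop_nat 1)
    have h2 := ((tendsto_const_nhds (x := (2:ℝ))).sub (h1.const_mul 2)).const_mul (C ^ 2)
    simpa using h2
  have hm3 : Tendsto (fun m : ℕ => a * ∑ l ∈ Finset.range (m + 1), g l) atTop (nhds a) := by
    have h1 : Tendsto (fun m : ℕ => ∑ l ∈ Finset.range (m + 1), g l) atTop (nhds 1) :=
      hgsum.tendsto_sum_nat.comp (tendsto_add_atTop_nat 1)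
    simpa using h1.const_mul a
  have hm4 : Tendsto (fun m : ℕ => b * ∑ l ∈ Finset.range (m + 1), f l) atTop (nhds b) := by
    have h1 : Tendsto (fun m : ℕ => ∑ l ∈ Finset.range (m + 1), f l) atTop (nhds 1) :=
      hfsum.tendsto_sum_nat.comp (tendsto_add_atTop_nat 1)
    simpa using h1.const_mul b
  obtain ⟨m, hmN, hm2', hm3', hm4'⟩ : ∃ m : ℕ, N₀ ≤ m + 1 ∧
      C ^ 2 * (2 - 2 * ∑ l ∈ Finset.range (m + 1), p l) < ε / 6 ∧
      |a * ∑ l ∈ Finset.range (m + 1), g l - a| < ε / 6 ∧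
      |b * ∑ l ∈ Finset.range (m + 1), f l - b| < ε / 6 := by
    have e1 := hm2.eventually_lt_const hεpos6
    have e2 := (Metric.tendsto_nhds.mp hm3) (ε / 6) hεpos6
    have e3 := (Metric.tendsto_nhds.mp hm4) (ε / 6) hεpos6
    obtain ⟨m, hm⟩ := ((eventually_ge_atTop N₀).and (e1.and (e2.and e3))).exists
    exact ⟨m, by omega, hm.2.1, by simpa [Real.dist_eq] using hm.2.2.1,
      by simpa [Real.dist_eq] using hm.2.2.2⟩
  -- eventual bounds in k
  have hB1 := Metric.tendsto_nhds.mp (boundary_tendsto (g := g) hpos hr hfa m) (ε / 6) hεpos6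
  have hB2 := Metric.tendsto_nhds.mp (boundary_tendsto' (f := f) hpos hr hgb m) (ε / 6) hεpos6
  have hmid : ∀ᶠ k in atTop,
      C ^ 2 * ((∑ l ∈ Finset.Ico (m + 1) (k - m), p (k - l) * p l) / p k) < ε / 3 := by
    have h := (mid_p_tendsto ⟨hpos, hr, hconv⟩ m).const_mul (C ^ 2)
    refine h.eventually_lt_const ?_
    calc C ^ 2 * (2 - 2 * ∑ l ∈ Finset.range (m + 1), p l) < ε / 6 := hm2'
      _ < ε / 3 := by linarith
  have hmidbound : ∀ k, (∑ l ∈ Finset.Ico (m + 1) (k - m), f (k - l) * g l)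
      ≤ C ^ 2 * ∑ l ∈ Finset.Ico (m + 1) (k - m), p (k - l) * p l := by
    intro k
    rw [Finset.mul_sum]
    refine Finset.sum_le_sum fun l hl => ?_
    rw [Finset.mem_Ico] at hl
    have hkl : N₀ ≤ k - l := by omega
    have hl' : N₀ ≤ l := by omega
    calc f (k - l) * g l ≤ (C * p (k - l)) * (C * p l) := by
          refine mul_le_mul (hN₀ _ hkl).1 (hN₀ _ hl').2 (hgnn l) ?_
          have := hpnn (k - l)
          positivity
      _ = C ^ 2 * (p (k - l) * p l) := by ring
  filter_upwards [hB1, hB2, hmid, hpos, eventually_ge_atTop (2 * m + 2)]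
    with k h1 h2 h3 h4 h5
  rw [Real.dist_eq]
  rw [Real.dist_eq] at h1 h2
  have hsplit := conv_split f g h5
  have hmdiv : (∑ l ∈ Finset.Ico (m + 1) (k - m), f (k - l) * g l) / p k
      ≤ C ^ 2 * ((∑ l ∈ Finset.Ico (m + 1) (k - m), p (k - l) * p l) / p k) := by
    rw [← mul_div_assoc]
    exact (div_le_div_iff_of_pos_right h4).mpr (hmidbound k)
  have hmnn : 0 ≤ (∑ l ∈ Finset.Ico (m + 1) (k - m), f (k - l) * g l) / p k := by
    refine div_nonneg (Finset.sum_nonneg fun l _ => mul_nonneg (hfnn _) (hgnn _)) h4.le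
  have hconvdiv : conv f g k / p k
      = (∑ l ∈ Finset.range (m + 1), f (k - l) * g l) / p k
        + (∑ l ∈ Finset.Ico (m + 1) (k - m), f (k - l) * g l) / p k
        + (∑ l ∈ Finset.range (m + 1), f l * g (k - l)) / p k := by
    rw [hsplit]; ring
  rw [hconvdiv]
  rw [abs_lt] at h1 h2 hm3' hm4' ⊢
  constructor <;> [linarith; linarith]

lemma convList_key {p : ℕ → ℝ} (hpnn : ∀ k, 0 ≤ p k) (hsum : HasSum p 1) (hS : SLocOne p)
    (L : List ((ℕ → ℝ) × ℝ))
    (hL : ∀ x ∈ L, (∀ k, 0 ≤ x.1 k) ∧ HasSum x.1 1 ∧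
      Tendsto (fun k => x.1 k / p k) atTop (nhds x.2)) :
    (∀ k, 0 ≤ convList (L.map Prod.fst) k) ∧ HasSum (convList (L.map Prod.fst)) 1 ∧
      Tendsto (fun k => convList (L.map Prod.fst) k / p k) atTop
        (nhds (L.map Prod.snd).sum) := by
  induction L with
  | nil =>
    refine ⟨fun k => by simp [convList, delta0]; positivity, ?_, ?_⟩
    · simp only [List.map_nil, convList]; unfold delta0; exact hasSum_ite_eq (0 : ℕ) (1 : ℝ)
    · simp only [List.map_nil, List.sum_nil, convList]
      refine Tendsto.congr' ?_ tendsto_const_nhds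
      filter_upwards [eventually_ge_atTop 1] with k hk
      have : k ≠ 0 := by omega
      simp [delta0, this]
  | cons x L ih =>
    obtain ⟨hx1, hx2, hx3⟩ := hL x List.mem_cons_self
    obtain ⟨ih1, ih2, ih3⟩ := ih fun y hy => hL y (List.mem_cons_of_mem x hy)
    simp only [List.map_cons, List.sum_cons, convList]
    exact ⟨conv_nonneg hx1 ih1, hasSum_conv hx1 ih1 hx2 ih2,
      key hpnn hsum hS hx1 ih1 hx2 ih2 hx3 ih3⟩

/-- Span-1 case of Proposition 3 of Asmussen–Foss–Korshunov: if `U ∈ S_loc(1)` and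
independent `U^{(j)}` satisfy `P(U^{(j)}=k)/P(U=k) → c_j`, then
`P(U^{(1)}+⋯+U^{(n)}=k)/P(U=k) → c₁+⋯+c_n`. -/
theorem stmt18 (n : ℕ) (p : ℕ → ℝ) (hnn : ∀ k, 0 ≤ p k) (hsum : HasSum p 1)
    (hS : SLocOne p)
    (q : Fin n → ℕ → ℝ) (hqnn : ∀ j k, 0 ≤ q j k) (hqsum : ∀ j, HasSum (q j) 1)
    (c : Fin n → ℝ) (hc : ∀ j, 0 ≤ c j)
    (hlim : ∀ j, Tendsto (fun k => q j k / p k) atTop (nhds (c j))) :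
    Tendsto (fun k => convList (List.ofFn q) k / p k) atTop (nhds (∑ j, c j)) := by
  have h := (convList_key hnn hsum hS (List.ofFn fun j => (q j, c j)) ?_).2.2
  · have e1 : (List.ofFn fun j => (q j, c j)).map Prod.fst = List.ofFn q := by
      simp [List.map_ofFn]
      rfl
    have e2 : ((List.ofFn fun j => (q j, c j)).map Prod.snd).sum = ∑ j, c j := by
      simp [List.map_ofFn, Function.comp, List.sum_ofFn]
    rwa [e1, e2] at h
  · intro x hx
    rw [List.mem_ofFn] at hx
    obtain ⟨j, rfl⟩ := hx
    exact ⟨hqnn j, hqsum j, hlim j⟩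
end
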